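/- Contiguous relation for monic q-Laguerre polynomials: for n ≥ 1 and real α, L̃_n^{(α−1)}(x; q) = L̃_n^{(α)}(x; q) − [(q^n − 1) q / q^{2n+α}] · L̃_{n−1}^{(α)}(x; q), as an identity of polynomials in x. -/

import Mathlib

/-- The q-Pochhammer symbol `(a; q)_m`. -/
noncomputable def qPoch (q a : ℝ) (m : ℕ) : ℝ := ∏ j ∈ Finset.range m, (1 - a * q ^ j)

/-- The monic q-Laguerre polynomial
`L̃_n^{(α)}(x; q) = (−1)^n q^{−n(n+α)} (q^{α+1};q)_n ₁φ₁(q^{-n}; q^{α+1}; q, −q^{n+α+1} x)`,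
where real powers of `q` are taken via `Real.rpow`. -/
noncomputable def qLaguerre (q α : ℝ) (n : ℕ) (x : ℝ) : ℝ :=
  (-1 : ℝ) ^ n * q ^ (-((n : ℝ) * ((n : ℝ) + α))) * qPoch q (q ^ (α + 1)) n *
    ∑ m ∈ Finset.range (n + 1),
      qPoch q (q ^ (-(n : ℤ))) m * (-1 : ℝ) ^ m * q ^ (m * (m - 1) / 2) *
          (-(q ^ ((n : ℝ) + α + 1)) * x) ^ m /
        (qPoch q (q ^ (α + 1)) m * qPoch q q m)

lemma rpow_ne_one {q : ℝ} (hq : 0 < q) (hq1 : q < 1) {t : ℝ} (ht : t ≠ 0) : q ^ t ≠ 1 := by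
  rcases ht.lt_or_gt with h | h
  · exact ne_of_gt ((Real.one_lt_rpow_iff_of_pos hq).2 (Or.inr ⟨hq1, h⟩))
  · exact ne_of_lt (Real.rpow_lt_one hq.le hq1 h)

lemma one_sub_rpow_ne {q : ℝ} (hq : 0 < q) (hq1 : q < 1) {t : ℝ} (ht : t ≠ 0) : 1 - q ^ t ≠ 0 :=
  sub_ne_zero.2 (rpow_ne_one hq hq1 ht).symm

lemma qPoch_rpow_ne {q : ℝ} (hq : 0 < q) (hq1 : q < 1) (t : ℝ) (m : ℕ)
    (h : ∀ j < m, t + (j:ℝ) ≠ 0) : qPoch q (q ^ t) m ≠ 0 := by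
  rw [qPoch, Finset.prod_ne_zero_iff]
  intro j hj
  rw [← Real.rpow_natCast q j, ← Real.rpow_add hq]
  exact one_sub_rpow_ne hq hq1 (h j (Finset.mem_range.1 hj))

lemma qPoch_split (q a : ℝ) (m k : ℕ) :
    qPoch q a (m + k) = qPoch q a m * ∏ j ∈ Finset.range k, (1 - a * q ^ (m + j)) := by
  rw [qPoch, qPoch, Finset.prod_range_add]

lemma qPoch_succ (q a : ℝ) (m : ℕ) :
    qPoch q a (m + 1) = qPoch q a m * (1 - a * q ^ m) := by
  rw [qPoch, qPoch, Finset.prod_range_succ]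

lemma qPoch_succ' (q a : ℝ) (m : ℕ) :
    qPoch q a (m + 1) = (1 - a) * qPoch q (a * q) m := by
  rw [qPoch, qPoch, Finset.prod_range_succ', pow_zero, mul_one, mul_comm]
  congr 1
  refine Finset.prod_congr rfl fun j _ => ?_
  rw [pow_succ]; ring

lemma qPoch_ratio (q a : ℝ) (m : ℕ) :
    (1 - a) * qPoch q (a * q) m = qPoch q a m * (1 - a * q ^ m) := by
  rw [← qPoch_succ', qPoch_succ]

/-- Contiguous relation for monic q-Laguerre polynomials:
`L̃_n^{(α−1)}(x; q) = L̃_n^{(α)}(x; q) − ((q^n − 1) q / q^{2n+α}) L̃_{n−1}^{(α)}(x; q)`. -/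
theorem qLaguerre_shift_alpha (q α : ℝ) (n : ℕ)
    (hq : 0 < q) (hq1 : q < 1) (hn : 1 ≤ n)
    (hα : ∀ m : ℕ, α + (m : ℝ) ≠ 0) :
    ∀ x : ℝ,
      qLaguerre q (α - 1) n x
        = qLaguerre q α n x
          - ((q ^ n - 1) * q / q ^ (2 * (n : ℝ) + α)) * qLaguerre q α (n - 1) x := by
  intro x
  obtain ⟨N, rfl⟩ : ∃ N, n = N + 1 := ⟨n - 1, by omega⟩
  simp only [qLaguerre, Nat.add_sub_cancel]
  rw [Finset.mul_sum, Finset.mul_sum, Finset.mul_sum, Finset.mul_sum]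
  -- the (N)-sum extended to range (N+2): last term vanishes
  have hlast : (qPoch q (q ^ (-(N : ℤ))) (N+1) : ℝ) = 0 := by
    refine Finset.prod_eq_zero (Finset.self_mem_range_succ N) ?_
    rw [← zpow_natCast q N, ← zpow_add₀ (ne_of_gt hq)]
    simp
  have hext : (∑ m ∈ Finset.range (N + 1 + 1),
        (q ^ (N+1) - 1) * q / q ^ (2 * ((N+1 : ℕ) : ℝ) + α) *
          ((-1 : ℝ) ^ N * q ^ (-((N : ℝ) * ((N : ℝ) + α))) * qPoch q (q ^ (α + 1)) N *
            (qPoch q (q ^ (-(N : ℤ))) m * (-1 : ℝ) ^ m * q ^ (m * (m - 1) / 2) *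
              (-(q ^ ((N : ℝ) + α + 1)) * x) ^ m /
            (qPoch q (q ^ (α + 1)) m * qPoch q q m))))
      = ∑ m ∈ Finset.range (N + 1),
        (q ^ (N+1) - 1) * q / q ^ (2 * ((N+1 : ℕ) : ℝ) + α) *
          ((-1 : ℝ) ^ N * q ^ (-((N : ℝ) * ((N : ℝ) + α))) * qPoch q (q ^ (α + 1)) N *
            (qPoch q (q ^ (-(N : ℤ))) m * (-1 : ℝ) ^ m * q ^ (m * (m - 1) / 2) *
              (-(q ^ ((N : ℝ) + α + 1)) * x) ^ m /
            (qPoch q (q ^ (α + 1)) m * qPoch q q m))) := by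
    rw [Finset.sum_range_succ, hlast]; ring
  rw [← hext, ← Finset.sum_sub_distrib]
  refine Finset.sum_congr rfl fun m hm => ?_
  have hm' : m ≤ N + 1 := by simpa [Nat.lt_succ_iff] using Finset.mem_range.1 hm
  -- conversion lemmas
  have hz1 : (q : ℝ) ^ (-((N + 1 : ℕ) : ℤ)) = q ^ (-((N : ℝ) + 1)) := by
    rw [← Real.rpow_intCast q]; push_cast; ring_nf
  have hz2 : (q : ℝ) ^ (-(N : ℤ)) = q ^ (-(N : ℝ)) := by
    rw [← Real.rpow_intCast q]; push_cast; ring_nf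
  have hneg : ∀ t : ℝ, ∀ k : ℕ, (-(q ^ t) * x) ^ k = (-1 : ℝ) ^ k * q ^ (t * k) * x ^ k := by
    intro t k
    rw [mul_pow, neg_pow, ← Real.rpow_natCast (q ^ t) k, ← Real.rpow_mul hq.le]
  have hpC : q ^ (N + 1) - 1 = q ^ ((N : ℝ) + 1) * (1 - q ^ (-((N : ℝ) + 1))) := by
    rw [mul_one_sub, ← Real.rpow_add hq, ← Real.rpow_natCast q (N + 1)]
    push_cast
    rw [show ((N:ℝ) + 1 + -((N:ℝ) + 1) : ℝ) = 0 by ring, Real.rpow_zero]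
  have hQm : qPoch q q m ≠ 0 := by
    have := qPoch_rpow_ne hq hq1 1 m (by intro j hj; positivity)
    rwa [Real.rpow_one] at this
  have hA : qPoch q (q ^ α) m ≠ 0 :=
    qPoch_rpow_ne hq hq1 α m (fun j _ => hα j)
  have hA1 : qPoch q (q ^ (α + 1)) m ≠ 0 :=
    qPoch_rpow_ne hq hq1 (α + 1) m (fun j _ => by
      have := hα (j + 1); push_cast at this ⊢; exact fun hc => this (by linarith))
  have hD : q ^ (2 * ((N + 1 : ℕ) : ℝ) + α) ≠ 0 := (Real.rpow_pos_of_pos hq _).ne'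
  rw [show α - 1 + 1 = α by ring, hz1, hz2, hpC, hneg, hneg, hneg]
  rcases hm'.eq_or_lt with rfl | hlt
  · -- m = N + 1 case
    have hlast' : qPoch q (q ^ (-((N:ℝ)))) (N+1) = 0 := by rw [← hz2]; exact hlast
    rw [hlast']
    have key : q ^ (-(((N:ℝ) + 1) * ((N:ℝ) + α))) * q ^ (((N:ℝ) + α + 1) * ((N:ℝ) + 1))
        = q ^ (-(((N:ℝ) + 1) * ((N:ℝ) + 1 + α))) * q ^ (((N:ℝ) + 1 + α + 1) * ((N:ℝ) + 1)) := by
      rw [← Real.rpow_add hq, ← Real.rpow_add hq]; congr 1; ring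
    field_simp [hA, hA1, hQm]
    push_cast
    linear_combination (norm := ring_nf) (-1 : ℝ) ^ (N + 1) * qPoch q (q ^ (-((N:ℝ) + 1))) (N + 1) *
      x ^ (N + 1) * qPoch q (q ^ (α + 1)) (N + 1) * q ^ (((N:ℝ) + 1) * 2 + α) * key
  · -- m ≤ N case
    have hmN : m ≤ N := by omega
    obtain ⟨l, hN⟩ : ∃ l, N = m + l := ⟨N - m, by omega⟩
    have hS1 : qPoch q (q ^ α) (N+1) = qPoch q (q ^ α) m *
        ((1 - q ^ α * q ^ m) * ∏ j ∈ Finset.range l, (1 - q ^ (α+1) * q ^ (m + j))) := by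
      rw [show N + 1 = m + (l + 1) by omega, qPoch_split, Finset.prod_range_succ']
      have he : ∀ j ∈ Finset.range l,
          (1 - q ^ α * q ^ (m + (j + 1))) = (1 - q ^ (α+1) * q ^ (m + j)) := fun j _ => by
        rw [show m + (j + 1) = (m + j) + 1 by ring, pow_succ, Real.rpow_add_one hq.ne']
        ring
      rw [Finset.prod_congr rfl he, add_zero]
      ring
    have hS2 : qPoch q (q ^ (α+1)) (N+1) = qPoch q (q ^ (α+1)) m *
        ((∏ j ∈ Finset.range l, (1 - q ^ (α+1) * q ^ (m + j))) * (1 - q ^ (α+1) * q ^ N)) := by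
      rw [show N + 1 = m + (l + 1) by omega, qPoch_split, Finset.prod_range_succ,
        show m + l = N by omega]
    have hS3 : qPoch q (q ^ (α+1)) N = qPoch q (q ^ (α+1)) m *
        ∏ j ∈ Finset.range l, (1 - q ^ (α+1) * q ^ (m + j)) := by
      rw [hN, qPoch_split]
    have hB' : (1 - q ^ (-1 + -(N:ℝ))) * qPoch q (q ^ (-(N:ℝ))) m
        = qPoch q (q ^ (-1 + -(N:ℝ))) m * (1 - q ^ (-1 + -(N:ℝ)) * q ^ m) := by
      rw [show (-1 + -(N:ℝ)) = -((N:ℝ) + 1) by ring]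
      have haq : q ^ (-((N:ℝ) + 1)) * q = q ^ (-(N:ℝ)) := by
        rw [← Real.rpow_add_one hq.ne']; norm_num
      rw [← haq]; exact qPoch_ratio q _ m
    have hM1 : q ^ (-(((N:ℝ) + 1) * ((N:ℝ) + α))) * q ^ (((N:ℝ) + α + 1) * (m:ℝ)) *
          q ^ (2 * ((N:ℝ) + 1) + α)
        = q ^ ((N:ℝ) + 1) * q ^ (-((N:ℝ) * ((N:ℝ) + α))) * q ^ (((N:ℝ) + α + 1) * (m:ℝ)) * q := by
      simp only [← Real.rpow_add_one hq.ne', ← Real.rpow_add hq]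
      congr 1; ring
    have hM2 : q ^ (-(((N:ℝ) + 1) * ((N:ℝ) + 1 + α))) * q ^ (((N:ℝ) + 1 + α + 1) * (m:ℝ)) *
          q ^ (2 * ((N:ℝ) + 1) + α)
        = q ^ ((N:ℝ) + 1) * q ^ (-((N:ℝ) * ((N:ℝ) + α))) * q ^ (((N:ℝ) + α + 1) * (m:ℝ)) *
            q ^ (-1 + -(N:ℝ)) * q ^ m * q := by
      simp only [← Real.rpow_natCast q m, ← Real.rpow_add_one hq.ne', ← Real.rpow_add hq]
      congr 1; ring
    have hM3 : q ^ (-(((N:ℝ) + 1) * ((N:ℝ) + α))) * q ^ (((N:ℝ) + α + 1) * (m:ℝ)) *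
          q ^ (2 * ((N:ℝ) + 1) + α) * q ^ α * q ^ m
        = q ^ (-(((N:ℝ) + 1) * ((N:ℝ) + 1 + α))) * q ^ (((N:ℝ) + 1 + α + 1) * (m:ℝ)) *
            q ^ (2 * ((N:ℝ) + 1) + α) * q ^ (α + 1) * q ^ N := by
      simp only [← Real.rpow_natCast q m, ← Real.rpow_natCast q N, ← Real.rpow_add hq]
      congr 1; ring
    rw [hS1, hS2, hS3]
    field_simp [hA, hA1, hQm, hD]
    set T := ∏ j ∈ Finset.range l, (1 - q ^ (α + 1) * q ^ (m + j)) with hT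
    set K := ((-1:ℝ) ^ m) ^ 2 * q ^ (m * (m - 1) / 2) * x ^ m * T * qPoch q (q ^ α) m *
      (qPoch q (q ^ (α + 1)) m) ^ 2 * (qPoch q q m) ^ 2 with hK
    push_cast
    linear_combination (norm := ring_nf)
      ((-1:ℝ) ^ N * (x ^ m * T) * (q ^ ((N:ℝ) + 1) * q ^ (-((N:ℝ) * ((N:ℝ) + α))) *
        q ^ (((N:ℝ) + α + 1) * (m:ℝ)) * q)) * hB'
      + ((-1:ℝ) ^ N * (x ^ m * T) * qPoch q (q ^ (-1 + -(N:ℝ))) m) * (hM2 + hM3 - hM1)
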